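/- Consider a sequence of finite populations indexed by n = m·k (m → ∞, k and 0 < ℓ < k fixed) in the design-based stratified setup under Assumption 1. If for each d ∈ {0,1} one has (1/n)Σ_{i=1}^n Y_i(d)⁴ = o(n) as n → ∞ (equivalently (1/n²)Σ_i Y_i(d)⁴ → 0), then the paired-strata variance estimator V̂_n = (1/m)(τ̂²_n − κ̂_n) satisfies n·|V̂_n − E[V̂_n]| → 0 in probability as n → ∞. -/

import Mathlib

open MeasureTheory ProbabilityTheory Filter Finset Topology

noncomputable section

namespace DesignBased

/-- The uniform (probability) measure on a finite set of outcomes. -/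
def uniformFinset {α : Type*} [MeasurableSpace α] (S : Finset α) : Measure α :=
  ((S.card : ENNReal))⁻¹ • ∑ d ∈ S, Measure.dirac d

/-- Assignment vectors for a stratum of size `k` with exactly `ℓ` treated units. -/
def assignSet (k ℓ : ℕ) : Finset (Fin k → Bool) :=
  Finset.univ.filter fun d => (Finset.univ.filter fun i => d i = true).card = ℓ

/-- Assumption 1: the treatment assignment `D` is distributed as the product, over the `m`
strata, of the uniform distribution on assignment vectors with exactly `ℓ` treated units. -/
def Assumption1 {Ω : Type*} [MeasurableSpace Ω] (P : Measure Ω) (m k ℓ : ℕ)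
    (D : Ω → Fin m → Fin k → Bool) : Prop :=
  Measurable D ∧
    Measure.map D P = Measure.pi fun _ : Fin m => uniformFinset (assignSet k ℓ)

variable {Ω : Type*}

/-- The difference-in-means estimator. -/
def hatDelta (m k ℓ : ℕ) (Y1 Y0 : Fin m → Fin k → ℝ)
    (D : Ω → Fin m → Fin k → Bool) (ω : Ω) : ℝ :=
  ((m : ℝ) * ℓ)⁻¹ * ∑ j, ∑ i, (if D ω j i then Y1 j i else 0)
    - ((m : ℝ) * ((k : ℝ) - ℓ))⁻¹ * ∑ j, ∑ i, (if D ω j i then 0 else Y0 j i)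

/-- The finite population average treatment effect. -/
def Delta (m k : ℕ) (Y1 Y0 : Fin m → Fin k → ℝ) : ℝ :=
  ((m : ℝ) * k)⁻¹ * ∑ j, ∑ i, (Y1 j i - Y0 j i)

/-- The stratum-level difference-in-means estimator. -/
def hatDeltaJ (m k ℓ : ℕ) (Y1 Y0 : Fin m → Fin k → ℝ)
    (D : Ω → Fin m → Fin k → Bool) (j : Fin m) (ω : Ω) : ℝ :=
  (ℓ : ℝ)⁻¹ * ∑ i, (if D ω j i then Y1 j i else 0)
    - ((k : ℝ) - ℓ)⁻¹ * ∑ i, (if D ω j i then 0 else Y0 j i)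

/-- The stratum-level average treatment effect. -/
def DeltaJ (m k : ℕ) (Y1 Y0 : Fin m → Fin k → ℝ) (j : Fin m) : ℝ :=
  (k : ℝ)⁻¹ * ∑ i, (Y1 j i - Y0 j i)

/-- The first stratum of the `j`-th pair of strata (strata are paired adjacently). -/
def pairA (m : ℕ) (j : Fin (m / 2)) : Fin m := ⟨2 * j.1, by have := j.2; omega⟩

/-- The second stratum of the `j`-th pair of strata. -/
def pairB (m : ℕ) (j : Fin (m / 2)) : Fin m := ⟨2 * j.1 + 1, by have := j.2; omega⟩

/-- τ̂²ₙ. -/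
def tauSq (m k ℓ : ℕ) (Y1 Y0 : Fin m → Fin k → ℝ)
    (D : Ω → Fin m → Fin k → Bool) (ω : Ω) : ℝ :=
  (m : ℝ)⁻¹ * ∑ j, (hatDeltaJ m k ℓ Y1 Y0 D j ω) ^ 2

/-- κ̂ₙ. -/
def kappaHat (m k ℓ : ℕ) (Y1 Y0 : Fin m → Fin k → ℝ)
    (D : Ω → Fin m → Fin k → Bool) (ω : Ω) : ℝ :=
  2 / (m : ℝ) * ∑ j : Fin (m / 2),
    hatDeltaJ m k ℓ Y1 Y0 D (pairA m j) ω * hatDeltaJ m k ℓ Y1 Y0 D (pairB m j) ω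

/-- The paired-strata variance estimator V̂ₙ. -/
def hatV (m k ℓ : ℕ) (Y1 Y0 : Fin m → Fin k → ℝ)
    (D : Ω → Fin m → Fin k → Bool) (ω : Ω) : ℝ :=
  (m : ℝ)⁻¹ * (tauSq m k ℓ Y1 Y0 D ω - kappaHat m k ℓ Y1 Y0 D ω)

/-- The Imai variance estimator V̂ᴵᴹₙ. -/
def hatVIM (m k ℓ : ℕ) (Y1 Y0 : Fin m → Fin k → ℝ)
    (D : Ω → Fin m → Fin k → Bool) (ω : Ω) : ℝ :=
  ((m : ℝ) * ((m : ℝ) - 1))⁻¹ *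
    ∑ j, (hatDeltaJ m k ℓ Y1 Y0 D j ω - hatDelta m k ℓ Y1 Y0 D ω) ^ 2

/-- The standard normal cumulative distribution function. -/
def stdNormCDF (x : ℝ) : ℝ := ((gaussianReal 0 1) (Set.Iic x)).toReal

/-- Conditional variance of `Z` given the sub-σ-algebra `m0`. -/
def condVar' {Ω' : Type*} (m0 : MeasurableSpace Ω') {mΩ : MeasurableSpace Ω'} (P : Measure Ω')
    (Z : Ω' → ℝ) : Ω' → ℝ :=
  P[fun ω => (Z ω - (P[Z|m0]) ω) ^ 2 | m0]

lemma uniformFinset_prob {α : Type*} [MeasurableSpace α] {S : Finset α} (hS : S.Nonempty) :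
    IsProbabilityMeasure (uniformFinset S) := by
  constructor
  simp only [uniformFinset, Measure.smul_apply, Measure.coe_finset_sum, Finset.sum_apply,
    smul_eq_mul]
  rw [Finset.sum_congr rfl fun d _ => Measure.dirac_apply_of_mem (Set.mem_univ d)]
  rw [Finset.sum_const, nsmul_eq_mul, mul_one]
  exact ENNReal.inv_mul_cancel (Nat.cast_ne_zero.2 (Finset.card_ne_zero.2 hS))
    (ENNReal.natCast_ne_top _)

lemma assignSet_nonempty {k ℓ : ℕ} (h : ℓ ≤ k) : (assignSet k ℓ).Nonempty := by
  refine ⟨fun i => decide (i.1 < ℓ), ?_⟩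
  simp only [assignSet, Finset.mem_filter, Finset.mem_univ, true_and]
  have he : (Finset.univ.filter fun i : Fin k => decide (i.1 < ℓ) = true)
      = Finset.univ.filter fun i : Fin k => i.1 < ℓ := by
    apply Finset.filter_congr; intro i _; simp
  rw [he, Finset.card_filter]
  rw [Fin.sum_univ_eq_sum_range (fun j => if j < ℓ then 1 else 0) k]
  rw [← Finset.card_filter]
  rw [show (Finset.range k).filter (fun j => j < ℓ) = Finset.range ℓ from
    Finset.ext fun x => by simp only [Finset.mem_filter, Finset.mem_range]; omega]
  exact Finset.card_range ℓ

lemma pi_eval_preimage {ι : Type*} [Fintype ι] [DecidableEq ι] {β : ι → Type*}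
    [∀ i, MeasurableSpace (β i)] (μ : ∀ i, Measure (β i)) [∀ i, IsProbabilityMeasure (μ i)]
    (i : ι) (s : Set (β i)) :
    Measure.pi μ ((fun x : ∀ j, β j => x i) ⁻¹' s) = μ i s := by
  have h : ((fun x : ∀ j, β j => x i) ⁻¹' s)
      = Set.pi Set.univ (Function.update (fun j => (Set.univ : Set (β j))) i s) :=
    Set.eval_preimage
  rw [h, Measure.pi_pi]
  rw [Finset.prod_eq_single i (fun j _ hj => by rw [Function.update_of_ne hj]; exact measure_univ)
    (fun h => absurd (Finset.mem_univ i) h)]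
  rw [Function.update_self]

lemma iIndepFun_eval {ι : Type*} [Fintype ι] {β : ι → Type*}
    [∀ i, MeasurableSpace (β i)] (μ : ∀ i, Measure (β i)) [∀ i, IsProbabilityMeasure (μ i)] :
    iIndepFun (fun (i : ι) (x : ∀ j, β j) => x i) (Measure.pi μ) := by
  classical
  rw [iIndepFun_iff_measure_inter_preimage_eq_mul]
  intro S sets hsets
  have h1 : (⋂ i ∈ S, (fun x : ∀ j, β j => x i) ⁻¹' sets i)
      = Set.pi Set.univ (fun i => if i ∈ S then sets i else Set.univ) := by
    ext x
    simp only [Set.mem_iInter, Set.mem_preimage, Set.mem_pi, Set.mem_univ, true_implies]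
    constructor
    · intro h i
      by_cases hi : i ∈ S
      · simpa [hi] using h i hi
      · simp [hi]
    · intro h i hi
      simpa [hi] using h i
  rw [h1, Measure.pi_pi]
  rw [← Finset.prod_subset (Finset.subset_univ S) (fun i _ hi => by simp [hi])]
  refine Finset.prod_congr rfl fun i hi => ?_
  rw [if_pos hi, pi_eval_preimage]

lemma memℒp_finite {α : Type*} [Finite α] [MeasurableSpace α] [MeasurableSingletonClass α]
    (μ : Measure α) [IsFiniteMeasure μ] (f : α → ℝ) (p : ENNReal) : MemLp f p μ := by
  cases nonempty_fintype α
  refine MemLp.of_bound (measurable_of_countable f).aestronglyMeasurable (∑ x : α, ‖f x‖)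
    (Filter.Eventually.of_forall fun x => ?_)
  exact Finset.single_le_sum (fun y _ => norm_nonneg (f y)) (Finset.mem_univ x)

lemma sum_range_two_mul (N : ℕ) (g : ℕ → ℝ) :
    ∑ n ∈ Finset.range (2*N), g n = ∑ b ∈ Finset.range N, (g (2*b) + g (2*b+1)) := by
  induction N with
  | zero => simp
  | succ N ih =>
      rw [show 2*(N+1) = (2*N)+1+1 by omega, Finset.sum_range_succ, Finset.sum_range_succ,
        ih, Finset.sum_range_succ]
      ring

lemma core_identity (N : ℕ) (u : ℕ → ℝ) :
    (∑ n ∈ Finset.range (2*N), (u n)^2) - 2 * ∑ p ∈ Finset.range N, u (2*p) * u (2*p+1)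
      = ∑ b ∈ Finset.range N, (u (2*b) - u (2*b+1))^2 := by
  rw [sum_range_two_mul, Finset.mul_sum, ← Finset.sum_sub_distrib]
  exact Finset.sum_congr rfl fun b _ => by ring

lemma nat_identity (m : ℕ) (u : ℕ → ℝ) :
    (∑ n ∈ Finset.range m, (u n)^2) - 2 * ∑ p ∈ Finset.range (m/2), u (2*p) * u (2*p+1)
      = ∑ b ∈ Finset.range ((m+1)/2),
          (if 2*b+1 < m then (u (2*b) - u (2*b+1))^2 else (u (2*b))^2) := by
  rcases Nat.even_or_odd m with ⟨N, hN⟩ | ⟨N, hN⟩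
  · have hm : m = 2*N := by omega
    subst hm
    have h1 : (2*N)/2 = N := by omega
    have h2 : (2*N+1)/2 = N := by omega
    rw [h1, h2, core_identity]
    refine Finset.sum_congr rfl fun b hb => ?_
    rw [if_pos (by simp only [Finset.mem_range] at hb; omega)]
  · have hm : m = 2*N+1 := by omega
    subst hm
    have h1 : (2*N+1)/2 = N := by omega
    have h2 : (2*N+1+1)/2 = N+1 := by omega
    have h3 : ∑ b ∈ Finset.range N, (if 2*b+1 < 2*N+1 then (u (2*b) - u (2*b+1))^2
        else (u (2*b))^2) = ∑ b ∈ Finset.range N, (u (2*b) - u (2*b+1))^2 := by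
      refine Finset.sum_congr rfl fun b hb => ?_
      rw [if_pos (by simp only [Finset.mem_range] at hb; omega)]
    have hL : ∑ n ∈ Finset.range (2*N+1), (u n)^2
        = (∑ n ∈ Finset.range (2*N), (u n)^2) + (u (2*N))^2 := Finset.sum_range_succ _ _
    have hR : ∑ b ∈ Finset.range (N+1),
          (if 2*b+1 < 2*N+1 then (u (2*b) - u (2*b+1))^2 else (u (2*b))^2)
        = (∑ b ∈ Finset.range N, (u (2*b) - u (2*b+1))^2) + (u (2*N))^2 := by
      rw [Finset.sum_range_succ, if_neg (by omega), h3]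
    rw [h1, h2, hL, hR, ← core_identity]
    ring

def idxA (m : ℕ) (b : Fin ((m+1)/2)) : Fin m := ⟨2*b.1, by have := b.2; omega⟩

def idxB (m : ℕ) (b : Fin ((m+1)/2)) : Fin m := ⟨min (2*b.1+1) (m-1), by have := b.2; omega⟩

lemma idxA_val_div (m : ℕ) (b : Fin ((m+1)/2)) : (idxA m b).1 / 2 = b.1 := by
  simp only [idxA]; omega

lemma idxB_val_div (m : ℕ) (b : Fin ((m+1)/2)) : (idxB m b).1 / 2 = b.1 := by
  have := b.2; simp only [idxB]; omega

lemma hatDeltaJ_pow_four_le (m k ℓ : ℕ) (hℓ : 0 < ℓ) (hℓk : ℓ < k)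
    (Y1 Y0 : Fin m → Fin k → ℝ) (j : Fin m) (x : Fin m → Fin k → Bool) :
    (hatDeltaJ m k ℓ Y1 Y0 id j x) ^ 4 ≤ 8 * (k:ℝ)^3 * ∑ i, ((Y1 j i)^4 + (Y0 j i)^4) := by
  set a : Fin k → ℝ := fun i => |Y1 j i| + |Y0 j i| with ha
  have hl1 : (1:ℝ) ≤ (ℓ:ℝ) := by exact_mod_cast hℓ
  have hl2 : (1:ℝ) ≤ (k:ℝ) - (ℓ:ℝ) := by
    have : ((ℓ:ℝ) + 1) ≤ (k:ℝ) := by exact_mod_cast hℓk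
    linarith
  have habs : |hatDeltaJ m k ℓ Y1 Y0 id j x| ≤ ∑ i, a i := by
    rw [hatDeltaJ]
    refine (abs_sub _ _).trans ?_
    have hA : |(ℓ:ℝ)⁻¹ * ∑ i, (if x j i then Y1 j i else 0)| ≤ ∑ i, |Y1 j i| := by
      rw [abs_mul, abs_of_nonneg (by positivity : (0:ℝ) ≤ (ℓ:ℝ)⁻¹)]
      have h1 : (ℓ:ℝ)⁻¹ ≤ 1 := inv_le_one_of_one_le₀ hl1
      have h2 : |∑ i, (if x j i then Y1 j i else 0)| ≤ ∑ i, |Y1 j i| := by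
        refine (Finset.abs_sum_le_sum_abs _ _).trans (Finset.sum_le_sum fun i _ => ?_)
        split <;> simp [abs_nonneg]
      calc (ℓ:ℝ)⁻¹ * |∑ i, (if x j i then Y1 j i else 0)| ≤ 1 * (∑ i, |Y1 j i|) :=
            mul_le_mul h1 h2 (abs_nonneg _) (by norm_num)
        _ = ∑ i, |Y1 j i| := one_mul _
    have hB : |((k:ℝ) - ℓ)⁻¹ * ∑ i, (if x j i then 0 else Y0 j i)| ≤ ∑ i, |Y0 j i| := by
      rw [abs_mul, abs_of_nonneg (by positivity : (0:ℝ) ≤ ((k:ℝ) - ℓ)⁻¹)]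
      have h1 : ((k:ℝ) - ℓ)⁻¹ ≤ 1 := inv_le_one_of_one_le₀ hl2
      have h2 : |∑ i, (if x j i then 0 else Y0 j i)| ≤ ∑ i, |Y0 j i| := by
        refine (Finset.abs_sum_le_sum_abs _ _).trans (Finset.sum_le_sum fun i _ => ?_)
        split <;> simp [abs_nonneg]
      calc ((k:ℝ) - ℓ)⁻¹ * |∑ i, (if x j i then 0 else Y0 j i)| ≤ 1 * (∑ i, |Y0 j i|) :=
            mul_le_mul h1 h2 (abs_nonneg _) (by norm_num)
        _ = ∑ i, |Y0 j i| := one_mul _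
    calc |(ℓ:ℝ)⁻¹ * ∑ i, (if x j i then Y1 j i else 0)|
          + |((k:ℝ) - ℓ)⁻¹ * ∑ i, (if x j i then 0 else Y0 j i)|
        ≤ (∑ i, |Y1 j i|) + ∑ i, |Y0 j i| := add_le_add hA hB
      _ = ∑ i, a i := by rw [← Finset.sum_add_distrib]
  have ha0 : ∀ i, 0 ≤ a i := fun i => add_nonneg (abs_nonneg _) (abs_nonneg _)
  have hd4 : (hatDeltaJ m k ℓ Y1 Y0 id j x) ^ 4 ≤ (∑ i, a i)^4 := by
    have h1 : (hatDeltaJ m k ℓ Y1 Y0 id j x) ^ 4 = |hatDeltaJ m k ℓ Y1 Y0 id j x| ^ 4 := by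
      rw [pow_abs, abs_of_nonneg (by positivity)]
    rw [h1]
    exact pow_le_pow_left₀ (abs_nonneg _) habs 4
  have hpm : (∑ i, a i)^4 ≤ (k:ℝ)^3 * ∑ i, (a i)^4 := by
    have h2 : (∑ i, a i)^2 ≤ (k:ℝ) * ∑ i, (a i)^2 := by
      have := sq_sum_le_card_mul_sum_sq (s := (Finset.univ : Finset (Fin k))) (f := a)
      simpa using this
    have h3 : (∑ i, (a i)^2)^2 ≤ (k:ℝ) * ∑ i, ((a i)^2)^2 := by
      have := sq_sum_le_card_mul_sum_sq (s := (Finset.univ : Finset (Fin k)))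
        (f := fun i => (a i)^2)
      simpa using this
    calc (∑ i, a i)^4 = ((∑ i, a i)^2)^2 := by ring
      _ ≤ ((k:ℝ) * ∑ i, (a i)^2)^2 := pow_le_pow_left₀ (sq_nonneg _) h2 2
      _ = (k:ℝ)^2 * (∑ i, (a i)^2)^2 := by ring
      _ ≤ (k:ℝ)^2 * ((k:ℝ) * ∑ i, ((a i)^2)^2) := by
          exact mul_le_mul_of_nonneg_left h3 (by positivity)
      _ = (k:ℝ)^3 * ∑ i, ((a i)^2)^2 := by ring
      _ = (k:ℝ)^3 * ∑ i, (a i)^4 := by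
          rw [Finset.sum_congr rfl fun i _ => (by ring : ((a i)^2)^2 = (a i)^4)]
  have hterm : ∀ i, (a i)^4 ≤ 8 * ((Y1 j i)^4 + (Y0 j i)^4) := by
    intro i
    have hp : (0:ℝ) ≤ |Y1 j i| := abs_nonneg _
    have hq : (0:ℝ) ≤ |Y0 j i| := abs_nonneg _
    have h1 : |Y1 j i| ^ 4 = (Y1 j i)^4 := by rw [pow_abs, abs_of_nonneg (by positivity)]
    have h2 : |Y0 j i| ^ 4 = (Y0 j i)^4 := by rw [pow_abs, abs_of_nonneg (by positivity)]
    have h3 : (|Y1 j i| + |Y0 j i|)^4 ≤ 8 * (|Y1 j i|^4 + |Y0 j i|^4) := by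
      nlinarith [sq_nonneg (|Y1 j i| - |Y0 j i|), sq_nonneg (|Y1 j i| + |Y0 j i|),
        sq_nonneg (|Y1 j i|^2 - |Y0 j i|^2), mul_nonneg hp hq,
        mul_nonneg (mul_nonneg hp hp) (mul_nonneg hq hq)]
    calc (a i)^4 = (|Y1 j i| + |Y0 j i|)^4 := by rw [ha]
      _ ≤ 8 * (|Y1 j i|^4 + |Y0 j i|^4) := h3
      _ = 8 * ((Y1 j i)^4 + (Y0 j i)^4) := by rw [h1, h2]
  calc (hatDeltaJ m k ℓ Y1 Y0 id j x) ^ 4 ≤ (∑ i, a i)^4 := hd4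
    _ ≤ (k:ℝ)^3 * ∑ i, (a i)^4 := hpm
    _ ≤ (k:ℝ)^3 * ∑ i, 8 * ((Y1 j i)^4 + (Y0 j i)^4) := by
        exact mul_le_mul_of_nonneg_left (Finset.sum_le_sum fun i _ => hterm i) (by positivity)
    _ = 8 * (k:ℝ)^3 * ∑ i, ((Y1 j i)^4 + (Y0 j i)^4) := by
        rw [← Finset.mul_sum]; ring


def Tf (m k : ℕ) (Y1 Y0 : Fin m → Fin k → ℝ) (j : Fin m) : ℝ :=
  ∑ i, ((Y1 j i)^4 + (Y0 j i)^4)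

def Xb (m k ℓ : ℕ) (Y1 Y0 : Fin m → Fin k → ℝ) (b : Fin ((m+1)/2))
    (x : Fin m → Fin k → Bool) : ℝ :=
  if 2*b.1+1 < m then
    (hatDeltaJ m k ℓ Y1 Y0 id (idxA m b) x - hatDeltaJ m k ℓ Y1 Y0 id (idxB m b) x)^2
  else (hatDeltaJ m k ℓ Y1 Y0 id (idxA m b) x)^2


lemma var_bound (m k ℓ : ℕ) (hm : 1 ≤ m) (hℓ : 0 < ℓ) (hℓk : ℓ < k)
    (Y1 Y0 : Fin m → Fin k → ℝ) :
    variance (fun x : Fin m → Fin k → Bool => (m:ℝ) * (k:ℝ) * hatV m k ℓ Y1 Y0 id x)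
        (Measure.pi fun _ : Fin m => uniformFinset (assignSet k ℓ))
      ≤ 128 * (k:ℝ)^5 * (((m:ℝ)^2)⁻¹ * ∑ j, ∑ i, ((Y1 j i)^4 + (Y0 j i)^4)) := by
  haveI : IsProbabilityMeasure (uniformFinset (assignSet k ℓ)) :=
    uniformFinset_prob (assignSet_nonempty hℓk.le)
  set Q : Measure (Fin m → Fin k → Bool) :=
    Measure.pi fun _ : Fin m => uniformFinset (assignSet k ℓ) with hQ
  haveI hQp : IsProbabilityMeasure Q := by rw [hQ]; infer_instance
  have hm0 : ((m:ℝ)) ≠ 0 := Nat.cast_ne_zero.mpr (by omega)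
  -- Step 1: rewrite the statistic as a sum over blocks
  have hstat : (fun x : Fin m → Fin k → Bool => (m:ℝ) * (k:ℝ) * hatV m k ℓ Y1 Y0 id x)
      = fun x => ((k:ℝ) * (m:ℝ)⁻¹) * ∑ b, Xb m k ℓ Y1 Y0 b x := by
    funext x
    have hid : (∑ j, (hatDeltaJ m k ℓ Y1 Y0 id j x)^2)
        - 2 * ∑ p : Fin (m/2), hatDeltaJ m k ℓ Y1 Y0 id (pairA m p) x
            * hatDeltaJ m k ℓ Y1 Y0 id (pairB m p) x
        = ∑ b, Xb m k ℓ Y1 Y0 b x := by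
      classical
      set u : ℕ → ℝ := fun n => if h : n < m then hatDeltaJ m k ℓ Y1 Y0 id ⟨n, h⟩ x else 0
        with hu
      have e1 : ∑ j, (hatDeltaJ m k ℓ Y1 Y0 id j x)^2 = ∑ n ∈ Finset.range m, (u n)^2 := by
        rw [← Fin.sum_univ_eq_sum_range (fun n => (u n)^2) m]
        refine Finset.sum_congr rfl fun j _ => ?_
        rw [hu]
        simp only []
        rw [dif_pos j.2]
      have e2 : ∑ p : Fin (m/2), hatDeltaJ m k ℓ Y1 Y0 id (pairA m p) x
            * hatDeltaJ m k ℓ Y1 Y0 id (pairB m p) x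
          = ∑ p ∈ Finset.range (m/2), u (2*p) * u (2*p+1) := by
        rw [← Fin.sum_univ_eq_sum_range (fun p => u (2*p) * u (2*p+1)) (m/2)]
        refine Finset.sum_congr rfl fun p _ => ?_
        have hp := p.2
        rw [hu]
        simp only []
        rw [dif_pos (show 2*p.1 < m by omega), dif_pos (show 2*p.1+1 < m by omega)]
        rfl
      have e3 : ∑ b, Xb m k ℓ Y1 Y0 b x = ∑ b ∈ Finset.range ((m+1)/2),
          (if 2*b+1 < m then (u (2*b) - u (2*b+1))^2 else (u (2*b))^2) := by
        rw [← Fin.sum_univ_eq_sum_range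
          (fun b => if 2*b+1 < m then (u (2*b) - u (2*b+1))^2 else (u (2*b))^2) ((m+1)/2)]
        refine Finset.sum_congr rfl fun b _ => ?_
        have hb := b.2
        have hA : u (2*b.1) = hatDeltaJ m k ℓ Y1 Y0 id (idxA m b) x := by
          rw [hu]
          simp only []
          rw [dif_pos (show 2*b.1 < m by omega)]
          rfl
        by_cases h : 2*b.1+1 < m
        · have hB : u (2*b.1+1) = hatDeltaJ m k ℓ Y1 Y0 id (idxB m b) x := by
            rw [hu]
            simp only []
            rw [dif_pos h]
            have he : (⟨2*b.1+1, h⟩ : Fin m) = idxB m b := by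
              apply Fin.ext
              simp only [idxB]
              omega
            rw [he]
          simp only [Xb, if_pos h]
          rw [hA, hB]
        · simp only [Xb, if_neg h]
          rw [hA]
      rw [e1, e2, e3, nat_identity]
    rw [← hid, hatV, tauSq, kappaHat]
    field_simp
  rw [hstat, variance_const_mul]
  -- Step 2: independence
  have hind : iIndepFun
      (fun j (x : Fin m → Fin k → Bool) => hatDeltaJ m k ℓ Y1 Y0 id j x) Q := by
    have h0 := iIndepFun_eval (fun _ : Fin m => uniformFinset (assignSet k ℓ))
    have h1 := h0.comp (fun j (c : Fin k → Bool) =>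
      (ℓ:ℝ)⁻¹ * ∑ i, (if c i then Y1 j i else 0)
        - ((k:ℝ) - ℓ)⁻¹ * ∑ i, (if c i then 0 else Y0 j i))
      (fun j => measurable_of_countable _)
    exact h1
  have hpair : Set.Pairwise ↑(Finset.univ : Finset (Fin ((m+1)/2)))
      (fun b c => IndepFun (Xb m k ℓ Y1 Y0 b) (Xb m k ℓ Y1 Y0 c) Q) := by
    intro b _ c _ hbc
    have key : ∀ (u v : Fin m), u.1/2 = b.1 → v.1/2 = c.1 → u ≠ v := by
      intro u v hu hv huv
      exact hbc (Fin.ext (by rw [← hu, ← hv, huv]))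
    have hI := hind.indepFun_prodMk_prodMk (fun j => measurable_of_countable _)
      (idxA m b) (idxB m b) (idxA m c) (idxB m c)
      (key _ _ (idxA_val_div m b) (idxA_val_div m c))
      (key _ _ (idxA_val_div m b) (idxB_val_div m c))
      (key _ _ (idxB_val_div m b) (idxA_val_div m c))
      (key _ _ (idxB_val_div m b) (idxB_val_div m c))
    have hφ : ∀ b' : Fin ((m+1)/2),
        Measurable (fun pq : ℝ × ℝ => if 2*b'.1+1 < m then (pq.1 - pq.2)^2 else pq.1^2) := by
      intro b'
      by_cases h : 2*b'.1+1 < m <;> simp only [h, if_true, if_false] <;> fun_prop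
    exact hI.comp (hφ b) (hφ c)
  -- Step 3: variance of sum
  have hvs : variance (fun x => ∑ b, Xb m k ℓ Y1 Y0 b x) Q
      = ∑ b, variance (Xb m k ℓ Y1 Y0 b) Q := by
    have hfun : (fun x => ∑ b, Xb m k ℓ Y1 Y0 b x) = ∑ b, Xb m k ℓ Y1 Y0 b := by
      funext x; simp [Finset.sum_apply]
    rw [hfun]
    exact IndepFun.variance_sum (fun b _ => memℒp_finite Q _ 2) hpair
  -- Step 4: bound each variance
  have hvar_le : ∀ b, variance (Xb m k ℓ Y1 Y0 b) Q
      ≤ 64 * (k:ℝ)^3 * (Tf m k Y1 Y0 (idxA m b) + Tf m k Y1 Y0 (idxB m b)) := by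
    intro b
    have hT0A : 0 ≤ Tf m k Y1 Y0 (idxA m b) := Finset.sum_nonneg fun i _ => by positivity
    have hT0B : 0 ≤ Tf m k Y1 Y0 (idxB m b) := Finset.sum_nonneg fun i _ => by positivity
    have hk3 : (0:ℝ) ≤ (k:ℝ)^3 := by positivity
    have hXb2 : ∀ x, (Xb m k ℓ Y1 Y0 b x)^2
        ≤ 64 * (k:ℝ)^3 * (Tf m k Y1 Y0 (idxA m b) + Tf m k Y1 Y0 (idxB m b)) := by
      intro x
      have hA : (hatDeltaJ m k ℓ Y1 Y0 id (idxA m b) x)^4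
          ≤ 8 * (k:ℝ)^3 * Tf m k Y1 Y0 (idxA m b) :=
        hatDeltaJ_pow_four_le m k ℓ hℓ hℓk Y1 Y0 (idxA m b) x
      have hB : (hatDeltaJ m k ℓ Y1 Y0 id (idxB m b) x)^4
          ≤ 8 * (k:ℝ)^3 * Tf m k Y1 Y0 (idxB m b) :=
        hatDeltaJ_pow_four_le m k ℓ hℓ hℓk Y1 Y0 (idxB m b) x
      set p := hatDeltaJ m k ℓ Y1 Y0 id (idxA m b) x with hpd
      set q := hatDeltaJ m k ℓ Y1 Y0 id (idxB m b) x with hqd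
      by_cases h : 2*b.1+1 < m
      · have hXbe : Xb m k ℓ Y1 Y0 b x = (p - q)^2 := by simp only [Xb, if_pos h]; rfl
        rw [hXbe]
        have h8 : (p - q)^4 ≤ 8*(p^4 + q^4) := by
          nlinarith [sq_nonneg (p+q), sq_nonneg (p-q), sq_nonneg (p^2-q^2),
            sq_nonneg p, sq_nonneg q]
        nlinarith [hA, hB, h8]
      · have hXbe : Xb m k ℓ Y1 Y0 b x = p^2 := by simp only [Xb, if_neg h]; rfl
        rw [hXbe]
        nlinarith [hA, hB, hT0A, hT0B, hk3, mul_nonneg hk3 hT0B, mul_nonneg hk3 hT0A]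
    have h1 : variance (Xb m k ℓ Y1 Y0 b) Q ≤ ∫ x, (Xb m k ℓ Y1 Y0 b x)^2 ∂Q := by
      have := variance_le_expectation_sq (μ := Q) (X := Xb m k ℓ Y1 Y0 b)
        (measurable_of_countable _).aestronglyMeasurable
      simpa using this
    have h2 : ∫ x, (Xb m k ℓ Y1 Y0 b x)^2 ∂Q
        ≤ 64 * (k:ℝ)^3 * (Tf m k Y1 Y0 (idxA m b) + Tf m k Y1 Y0 (idxB m b)) := by
      have hint : Integrable (fun x => (Xb m k ℓ Y1 Y0 b x)^2) Q :=
        memLp_one_iff_integrable.mp (memℒp_finite Q _ 1)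
      calc ∫ x, (Xb m k ℓ Y1 Y0 b x)^2 ∂Q
          ≤ ∫ _x, (64 * (k:ℝ)^3 * (Tf m k Y1 Y0 (idxA m b) + Tf m k Y1 Y0 (idxB m b)) : ℝ) ∂Q :=
            integral_mono hint (integrable_const _) hXb2
        _ = 64 * (k:ℝ)^3 * (Tf m k Y1 Y0 (idxA m b) + Tf m k Y1 Y0 (idxB m b)) := by simp
    linarith
  -- Step 5: sum the bounds
  have hT0 : ∀ j, 0 ≤ Tf m k Y1 Y0 j := fun j => Finset.sum_nonneg fun i _ => by positivity
  have hinjA : ∀ a ∈ (Finset.univ : Finset (Fin ((m+1)/2))), ∀ b ∈ Finset.univ,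
      idxA m a = idxA m b → a = b := by
    intro a _ b _ h
    have := congrArg (fun t : Fin m => t.1 / 2) h
    simp only [idxA_val_div] at this
    exact Fin.ext this
  have hinjB : ∀ a ∈ (Finset.univ : Finset (Fin ((m+1)/2))), ∀ b ∈ Finset.univ,
      idxB m a = idxB m b → a = b := by
    intro a _ b _ h
    have := congrArg (fun t : Fin m => t.1 / 2) h
    simp only [idxB_val_div] at this
    exact Fin.ext this
  have hsA : ∑ b, Tf m k Y1 Y0 (idxA m b) ≤ ∑ j, Tf m k Y1 Y0 j := by
    calc ∑ b, Tf m k Y1 Y0 (idxA m b)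
        = ∑ j ∈ Finset.univ.image (idxA m), Tf m k Y1 Y0 j := (Finset.sum_image hinjA).symm
      _ ≤ ∑ j, Tf m k Y1 Y0 j :=
          Finset.sum_le_sum_of_subset_of_nonneg (Finset.subset_univ _) fun j _ _ => hT0 j
  have hsB : ∑ b, Tf m k Y1 Y0 (idxB m b) ≤ ∑ j, Tf m k Y1 Y0 j := by
    calc ∑ b, Tf m k Y1 Y0 (idxB m b)
        = ∑ j ∈ Finset.univ.image (idxB m), Tf m k Y1 Y0 j := (Finset.sum_image hinjB).symm
      _ ≤ ∑ j, Tf m k Y1 Y0 j :=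
          Finset.sum_le_sum_of_subset_of_nonneg (Finset.subset_univ _) fun j _ _ => hT0 j
  have hsum : ∑ b, variance (Xb m k ℓ Y1 Y0 b) Q ≤ 128 * (k:ℝ)^3 * ∑ j, Tf m k Y1 Y0 j := by
    calc ∑ b, variance (Xb m k ℓ Y1 Y0 b) Q
        ≤ ∑ b, 64 * (k:ℝ)^3 * (Tf m k Y1 Y0 (idxA m b) + Tf m k Y1 Y0 (idxB m b)) :=
          Finset.sum_le_sum fun b _ => hvar_le b
      _ = 64 * (k:ℝ)^3 * ((∑ b, Tf m k Y1 Y0 (idxA m b)) + ∑ b, Tf m k Y1 Y0 (idxB m b)) := by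
          rw [← Finset.sum_add_distrib, Finset.mul_sum]
      _ ≤ 64 * (k:ℝ)^3 * ((∑ j, Tf m k Y1 Y0 j) + ∑ j, Tf m k Y1 Y0 j) := by
          apply mul_le_mul_of_nonneg_left (add_le_add hsA hsB) (by positivity)
      _ = 128 * (k:ℝ)^3 * ∑ j, Tf m k Y1 Y0 j := by ring
  -- Step 6: conclude
  have hfin : ∑ j, Tf m k Y1 Y0 j = ∑ j, ∑ i, ((Y1 j i)^4 + (Y0 j i)^4) := rfl
  calc ((k:ℝ) * (m:ℝ)⁻¹)^2 * variance (fun x => ∑ b, Xb m k ℓ Y1 Y0 b x) Q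
      ≤ ((k:ℝ) * (m:ℝ)⁻¹)^2 * (128 * (k:ℝ)^3 * ∑ j, Tf m k Y1 Y0 j) := by
        apply mul_le_mul_of_nonneg_left _ (by positivity)
        rw [hvs]; exact hsum
    _ = 128 * (k:ℝ)^5 * (((m:ℝ)^2)⁻¹ * ∑ j, Tf m k Y1 Y0 j) := by
        field_simp
    _ = 128 * (k:ℝ)^5 * (((m:ℝ)^2)⁻¹ * ∑ j, ∑ i, ((Y1 j i)^4 + (Y0 j i)^4)) := by rw [hfin]


/-- Under Assumption 1 along a sequence of finite populations with
`(1/n)Σᵢ Yᵢ(d)⁴ = o(n)` for `d ∈ {0,1}`, the paired-strata estimator `V̂ₙ` is consistent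
for its expectation: `n·|V̂ₙ − E[V̂ₙ]| → 0` in probability. -/
theorem hatV_consistent (k ℓ : ℕ) (hℓ : 0 < ℓ) (hℓk : ℓ < k)
    (Ω : ℕ → Type*) [∀ m, MeasurableSpace (Ω m)]
    (P : ∀ m, Measure (Ω m)) [∀ m, IsProbabilityMeasure (P m)]
    (Y1 Y0 : (m : ℕ) → Fin m → Fin k → ℝ)
    (D : (m : ℕ) → Ω m → Fin m → Fin k → Bool)
    (hD : ∀ m, Assumption1 (P m) m k ℓ (D m))
    (h4 : Tendsto (fun m : ℕ => (((m : ℝ) * k) ^ 2)⁻¹ * ∑ j, ∑ i, (Y1 m j i) ^ 4)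
      atTop (𝓝 0))
    (h4' : Tendsto (fun m : ℕ => (((m : ℝ) * k) ^ 2)⁻¹ * ∑ j, ∑ i, (Y0 m j i) ^ 4)
      atTop (𝓝 0)) :
    ∀ ε : ℝ, 0 < ε →
      Tendsto (fun m : ℕ =>
          P m {ω | ε ≤ (m : ℝ) * k *
            |hatV m k ℓ (Y1 m) (Y0 m) (D m) ω
              - ∫ ω', hatV m k ℓ (Y1 m) (Y0 m) (D m) ω' ∂P m|})
        atTop (𝓝 0) := by
  intro ε hε
  have hk0 : 0 < k := hℓ.trans hℓk
  have hkR : (0:ℝ) < (k:ℝ) := by exact_mod_cast hk0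
  set c : ℕ → ℝ := fun m => 128 * (k:ℝ)^7 *
      ((((m:ℝ)*k)^2)⁻¹ * ∑ j, ∑ i, (Y1 m j i)^4
        + (((m:ℝ)*k)^2)⁻¹ * ∑ j, ∑ i, (Y0 m j i)^4) with hc
  have hctend : Tendsto c atTop (𝓝 0) := by
    have h := (h4.add h4').const_mul (128 * (k:ℝ)^7)
    simpa [hc] using h
  have hofreal : Tendsto (fun m => ENNReal.ofReal (c m / ε^2)) atTop (𝓝 0) := by
    have h1 : Tendsto (fun m => c m / ε^2) atTop (𝓝 0) := by
      simpa using hctend.div_const (ε^2)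
    have h2 := ENNReal.tendsto_ofReal h1
    simpa using h2
  refine tendsto_of_tendsto_of_tendsto_of_le_of_le' tendsto_const_nhds hofreal
    (Eventually.of_forall fun m => zero_le) ?_
  filter_upwards [eventually_ge_atTop 1] with m hm
  haveI : IsProbabilityMeasure (uniformFinset (assignSet k ℓ)) :=
    uniformFinset_prob (assignSet_nonempty hℓk.le)
  set Q : Measure (Fin m → Fin k → Bool) :=
    Measure.pi fun _ : Fin m => uniformFinset (assignSet k ℓ) with hQ
  haveI : IsProbabilityMeasure Q := by rw [hQ]; infer_instance
  set S : (Fin m → Fin k → Bool) → ℝ :=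
    fun x => (m:ℝ) * (k:ℝ) * hatV m k ℓ (Y1 m) (Y0 m) id x with hS
  have hmap : Measure.map (D m) (P m) = Q := (hD m).2
  have hGmeas : Measurable (fun x : Fin m → Fin k → Bool => hatV m k ℓ (Y1 m) (Y0 m) id x) :=
    measurable_of_countable _
  have hEeq : ∫ ω', hatV m k ℓ (Y1 m) (Y0 m) (D m) ω' ∂(P m)
      = ∫ x, hatV m k ℓ (Y1 m) (Y0 m) id x ∂Q := by
    rw [← hmap, integral_map (hD m).1.aemeasurable hGmeas.aestronglyMeasurable]
    rfl
  have habs : ∀ ω, (m:ℝ) * k * |hatV m k ℓ (Y1 m) (Y0 m) (D m) ω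
        - ∫ ω', hatV m k ℓ (Y1 m) (Y0 m) (D m) ω' ∂(P m)|
      = |S (D m ω) - ∫ x, S x ∂Q| := by
    intro ω
    rw [hEeq, hS]
    simp only []
    rw [MeasureTheory.integral_const_mul]
    have he : (m:ℝ) * (k:ℝ) * hatV m k ℓ (Y1 m) (Y0 m) id (D m ω)
        - (m:ℝ) * (k:ℝ) * ∫ x, hatV m k ℓ (Y1 m) (Y0 m) id x ∂Q
        = (m:ℝ) * (k:ℝ) * (hatV m k ℓ (Y1 m) (Y0 m) id (D m ω)
            - ∫ x, hatV m k ℓ (Y1 m) (Y0 m) id x ∂Q) := by ring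
    rw [he, abs_mul, abs_of_nonneg (show (0:ℝ) ≤ (m:ℝ)*(k:ℝ) by positivity)]
    rfl
  have hsetP : {ω | ε ≤ (m:ℝ) * k * |hatV m k ℓ (Y1 m) (Y0 m) (D m) ω
        - ∫ ω', hatV m k ℓ (Y1 m) (Y0 m) (D m) ω' ∂(P m)|}
      = (D m) ⁻¹' {x | ε ≤ |S x - ∫ x', S x' ∂Q|} := by
    ext ω
    simp only [Set.mem_setOf_eq, Set.mem_preimage, habs ω]
  rw [hsetP]
  have hPQ : P m ((D m) ⁻¹' {x | ε ≤ |S x - ∫ x', S x' ∂Q|})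
      = Q {x | ε ≤ |S x - ∫ x', S x' ∂Q|} := by
    rw [← hmap, Measure.map_apply (hD m).1 ((Set.to_countable _).measurableSet)]
  rw [hPQ]
  have hcheb := meas_ge_le_variance_div_sq (μ := Q) (X := S) (memℒp_finite Q S 2) hε
  refine le_trans hcheb ?_
  apply ENNReal.ofReal_le_ofReal
  have hvb : variance S Q ≤ c m := by
    have h1 := var_bound m k ℓ hm hℓ hℓk (Y1 m) (Y0 m)
    refine le_trans h1 ?_
    simp only [hc]
    have hsplit : ∑ j, ∑ i, ((Y1 m j i)^4 + (Y0 m j i)^4)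
        = (∑ j, ∑ i, (Y1 m j i)^4) + ∑ j, ∑ i, (Y0 m j i)^4 := by
      rw [← Finset.sum_add_distrib]
      exact Finset.sum_congr rfl fun j _ => Finset.sum_add_distrib
    rw [hsplit]
    apply le_of_eq
    have hmne : ((m:ℝ)) ≠ 0 := Nat.cast_ne_zero.mpr (by omega)
    have hkne : ((k:ℝ)) ≠ 0 := ne_of_gt hkR
    field_simp
  gcongr


end DesignBased
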